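/- Let n ≥ 1 and a, b : {1,…,n} → ℕ. For a vector v and 1 ≤ i ≤ n write |v_{>i}| = Σ_{j>i} v_j and |v| = Σ_j v_j. Then for every integer t: ∏_{i=1}^{n} ( t + |a_{>i}| − |b_{>i}| )_{b_i} = Σ_{p} ( ∏_{i=1}^{n−1} C(b_i, p_i) · ( |a_{>i}| − |p_{>i}| )_{p_i} ) · (t)_{|b| − |p|}, where the sum runs over all p : {1,…,n−1} → ℕ with p_i ≤ b_i for each i, (x)_r = x(x−1)⋯(x−r+1) denotes the falling factorial of an integer x (with (x)_0 = 1), and C denotes the binomial coefficient. (All terms in which |p_{>i}| > |a_{>i}| for some i vanish.) -/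

import Mathlib

open Finset Polynomial

/-- The falling factorial `(x)_r = x(x-1)⋯(x-r+1)` of an integer `x`, with `(x)_0 = 1`. -/
noncomputable def fallInt (x : ℤ) (r : ℕ) : ℤ := (descPochhammer ℤ r).eval x

/-- `|v_{>i}| = Σ_{j > i} v_j`. -/
def gtSum {N : ℕ} (v : Fin N → ℕ) (i : Fin N) : ℕ :=
  ∑ j ∈ Finset.univ.filter (fun j : Fin N => i < j), v j

/-- The identity obtained by evaluating the normal-form expansion
`∏_{i=1}^n x^{a_i} y^{b_i} = Σ_k N(A,k) x^{|a|-k} y^{|b|-k} ℏ^k` in the Weyl algebra on the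
monomial `x^t`:  for all `a, b : Fin (n+1) → ℕ` (so `n+1 ≥ 1` indices) and every `t : ℤ`,
`∏_i (t + |a_{>i}| - |b_{>i}|)_{b_i}` equals
`Σ_p (∏_i C(b_i,p_i) (|a_{>i}| - |p_{>i}|)_{p_i}) (t)_{|b|-|p|}`,
summed over `p` on the first `n` indices with `p_i ≤ b_i`. -/
lemma gtSum_zero {N : ℕ} (v : Fin (N+1) → ℕ) :
    gtSum v 0 = ∑ j : Fin N, v j.succ := by
  rw [gtSum, Finset.sum_filter, Fin.sum_univ_succ]
  simp [Fin.succ_pos]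

lemma gtSum_succ {N : ℕ} (v : Fin (N+1) → ℕ) (i : Fin N) :
    gtSum v i.succ = gtSum (fun j => v j.succ) i := by
  rw [gtSum, gtSum, Finset.sum_filter, Finset.sum_filter, Fin.sum_univ_succ]
  simp [Fin.succ_lt_succ_iff]

lemma filter_sum_zero' {M : Type*} [AddCommMonoid M] {N : ℕ} (w : Fin (N+1) → M) :
    ∑ j ∈ Finset.univ.filter (fun j : Fin (N+1) => 0 < j), w j = ∑ j : Fin N, w j.succ := by
  rw [Finset.sum_filter, Fin.sum_univ_succ]
  simp [Fin.succ_pos]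

lemma filter_sum_succ' {M : Type*} [AddCommMonoid M] {N : ℕ} (w : Fin (N+1) → M) (i : Fin N) :
    ∑ j ∈ Finset.univ.filter (fun j : Fin (N+1) => i.succ < j), w j
      = ∑ j ∈ Finset.univ.filter (fun j : Fin N => i < j), w j.succ := by
  rw [Finset.sum_filter, Finset.sum_filter, Fin.sum_univ_succ]
  simp [Fin.succ_lt_succ_iff]

lemma fallInt_add (x : ℤ) (n m : ℕ) :
    fallInt x (n + m) = fallInt x n * fallInt (x - n) m := by
  have h := congrArg (Polynomial.eval x) (descPochhammer_mul (R := ℤ) n m)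
  simpa [fallInt, eval_comp] using h.symm

lemma fallInt_vandermonde (k : ℕ) (x y : ℤ) :
    fallInt (x + y) k =
      ∑ ij ∈ antidiagonal k, (k.choose ij.1 : ℤ) * (fallInt x ij.1 * fallInt y ij.2) := by
  have h := Ring.descPochhammer_smeval_add (R := ℤ) (r := x) (s := y) k (Commute.all x y)
  simpa [fallInt, eval_eq_smeval] using h

lemma key (c m : ℕ) (A t : ℤ) :
    fallInt (t - m + A) c * fallInt t m
      = ∑ k ∈ range (c+1), (c.choose k : ℤ) * fallInt A k * fallInt t (m + (c - k)) := by
  have hv := fallInt_vandermonde c A (t - m)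
  rw [Finset.Nat.sum_antidiagonal_eq_sum_range_succ_mk] at hv
  have : t - (m:ℤ) + A = A + (t - m) := by ring
  rw [this, hv, Finset.sum_mul]
  refine Finset.sum_congr rfl fun k hk => ?_
  rw [fallInt_add t m (c - k)]
  ring

lemma nat_arith (B Q b0 p0 s1 s2 : ℕ) (hQle : Q ≤ B) (hp0 : p0 ≤ b0) (hB : B = s1 + s2) :
    B - Q + (b0 - p0) = b0 + s1 + s2 - (p0 + Q) := by omega

lemma sum_p_le {N : ℕ} (c : Fin (N+1) → ℕ) (p : (i : Fin N) → Fin (c i.castSucc + 1)) :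
    ∑ i : Fin N, (p i : ℕ) ≤ ∑ i : Fin (N+1), c i := by
  rw [Fin.sum_univ_castSucc]
  exact le_trans (Finset.sum_le_sum fun i _ => Nat.lt_succ_iff.mp (p i).isLt)
    (Nat.le_add_right _ _)

theorem statement9 (n : ℕ) (a b : Fin (n + 1) → ℕ) (t : ℤ) :
    ∏ i : Fin (n + 1), fallInt (t + (gtSum a i : ℤ) - (gtSum b i : ℤ)) (b i) =
      ∑ p : (i : Fin n) → Fin (b i.castSucc + 1),
        (∏ i : Fin n,
            ((b i.castSucc).choose (p i) : ℤ) *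
              fallInt ((gtSum a i.castSucc : ℤ) -
                  ((∑ j ∈ Finset.univ.filter (fun j : Fin n => i < j), ((p j : ℕ))) : ℤ))
                (p i)) *
          fallInt t ((∑ i : Fin (n + 1), b i) - ∑ i : Fin n, (p i : ℕ)) := by
  induction n with
  | zero =>
    have h0 : ∀ v : Fin 1 → ℕ, gtSum v 0 = 0 := fun v => by simp [gtSum_zero v]
    simp [Fin.prod_univ_one, Fin.sum_univ_one, h0]
  | succ m ih =>
    set a' : Fin (m+1) → ℕ := fun j => a j.succ with ha'
    set b' : Fin (m+1) → ℕ := fun j => b j.succ with hb'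
    -- LHS
    rw [Fin.prod_univ_succ]
    have hprod :
        (∏ i : Fin (m+1), fallInt (t + (gtSum a i.succ : ℤ) - (gtSum b i.succ : ℤ)) (b i.succ))
          = ∑ p' : (i : Fin m) → Fin (b' i.castSucc + 1),
              (∏ i : Fin m,
                  ((b' i.castSucc).choose (p' i) : ℤ) *
                    fallInt ((gtSum a' i.castSucc : ℤ) -
                        ((∑ j ∈ Finset.univ.filter (fun j : Fin m => i < j), ((p' j : ℕ))) : ℤ))
                      (p' i)) *
                fallInt t ((∑ i : Fin (m + 1), b' i) - ∑ i : Fin m, (p' i : ℕ)) := by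
      simp only [gtSum_succ]
      exact ih a' b'
    rw [hprod, Finset.mul_sum]
    -- RHS: split off p 0
    rw [← Fintype.sum_equiv (Fin.consEquiv (fun i : Fin (m+1) => Fin (b i.castSucc + 1)))
        _ _ (fun q => rfl), Fintype.sum_prod_type, Finset.sum_comm]
    refine Finset.sum_congr rfl fun p' _ => ?_
    -- now fix p'
    have hQle : (∑ i : Fin m, (p' i : ℕ)) ≤ ∑ i : Fin (m+1), b' i := sum_p_le b' p'
    set Q : ℕ := ∑ i : Fin m, (p' i : ℕ) with hQ
    set B : ℕ := ∑ i : Fin (m+1), b' i with hB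
    have hgb : gtSum b 0 = B := gtSum_zero b
    have hga : gtSum a 0 = ∑ j : Fin (m+1), a' j := gtSum_zero a
    have ht : t + (gtSum a 0 : ℤ) - (gtSum b 0 : ℤ)
        = t - (B - Q : ℕ) + ((∑ j : Fin (m+1), a' j : ℕ) - (Q : ℤ)) := by
      rw [hgb, hga]
      have : ((B - Q : ℕ) : ℤ) = (B : ℤ) - Q := by
        exact_mod_cast Int.ofNat_sub hQle
      rw [this]; ring
    rw [ht, mul_left_comm,
      key (b 0) (B - Q) ((∑ j : Fin (m+1), a' j : ℕ) - (Q : ℤ)) t,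
      Finset.mul_sum, ← Fin.sum_univ_eq_sum_range _ (b 0 + 1)]
    refine Finset.sum_congr rfl fun p₀ _ => ?_
    -- match summands
    have hp₀ : (p₀ : ℕ) ≤ b 0 := Nat.lt_succ_iff.mp p₀.isLt
    simp only [Fin.consEquiv_apply]
    rw [Fin.prod_univ_succ]
    simp only [Fin.cons_zero, Fin.cons_succ, Fin.castSucc_zero, ← Fin.succ_castSucc,
      gtSum_succ, filter_sum_zero', filter_sum_succ', Fin.sum_univ_succ, hga]
    have hc0 : ((Fin.cons (α := fun i : Fin (m+1) => Fin (b i.castSucc + 1)) p₀ p' 0 : Fin _) : ℕ)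
        = (p₀ : ℕ) := rfl
    have hcs : ∀ x : Fin m,
        ((Fin.cons (α := fun i : Fin (m+1) => Fin (b i.castSucc + 1)) p₀ p' x.succ : Fin _) : ℕ)
          = (p' x : ℕ) := fun _ => rfl
    simp only [hc0, hcs]
    have hB' : B = ∑ i : Fin (m+1), b i.succ := by simp [hB, hb']
    have hB'' : B = b (Fin.succ 0) + ∑ i : Fin m, b i.succ.succ := by
      rw [hB']; exact Fin.sum_univ_succ _
    have harg := nat_arith B Q (b 0) (p₀:ℕ) (b (Fin.succ 0)) (∑ i : Fin m, b i.succ.succ)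
      hQle hp₀ hB''
    rw [harg]
    simp only [ha', hb', hQ]
    push_cast
    ring
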